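/- Let X, Y, Z be Banach spaces, T : X → Y a Tauberian operator, and u : X → Z a weakly compact operator. Then the operator T_1 : X → Y ⊕_1 Z defined by T_1 x = (Tx, ux) is Tauberian; more simply, if v : X → Y is weakly compact, then T + v : X → Y is Tauberian. -/

import Mathlib

open NormedSpace

variable {X Y : Type*} [NormedAddCommGroup X] [NormedSpace ℝ X]
  [NormedAddCommGroup Y] [NormedSpace ℝ Y]

/-- The adjoint `T* : Y* → X*` of a bounded operator `T : X → Y`. -/
noncomputable def adjointOp (T : X →L[ℝ] Y) : StrongDual ℝ Y →L[ℝ] StrongDual ℝ X :=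
  (ContinuousLinearMap.compSL X Y ℝ (RingHom.id ℝ) (RingHom.id ℝ)).flip T

/-- The double adjoint `T** : X** → Y**`. -/
noncomputable def bidualOp (T : X →L[ℝ] Y) :
    StrongDual ℝ (StrongDual ℝ X) →L[ℝ] StrongDual ℝ (StrongDual ℝ Y) :=
  adjointOp (adjointOp T)

/-- `T` is Tauberian: `(T**)⁻¹(Y) = X` under the canonical embeddings. -/
def Tauberian (T : X →L[ℝ] Y) : Prop :=
  ∀ F : StrongDual ℝ (StrongDual ℝ X), (∃ y : Y, bidualOp T F = inclusionInDoubleDual ℝ Y y) →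
    ∃ x : X, F = inclusionInDoubleDual ℝ X x

/-- `v` is weakly compact: `v**(X**) ⊆ Y` under the canonical embedding of `Y` in `Y**`. -/
def WeaklyCompactOp (v : X →L[ℝ] Y) : Prop :=
  ∀ F : StrongDual ℝ (StrongDual ℝ X), ∃ y : Y, bidualOp v F = inclusionInDoubleDual ℝ Y y

section Aux

variable {Z : Type*} [NormedAddCommGroup Z] [NormedSpace ℝ Z]

lemma adjointOp_add (T v : X →L[ℝ] Y) : adjointOp (T + v) = adjointOp T + adjointOp v :=
  map_add _ _ _

lemma bidualOp_add (T v : X →L[ℝ] Y) (F : StrongDual ℝ (StrongDual ℝ X)) :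
    bidualOp (T + v) F = bidualOp T F + bidualOp v F := by
  unfold bidualOp
  rw [adjointOp_add, adjointOp_add]
  rfl

lemma bidualOp_comp (A : Y →L[ℝ] Z) (B : X →L[ℝ] Y) :
    bidualOp (A.comp B) = (bidualOp A).comp (bidualOp B) := rfl

lemma bidualOp_incl (A : X →L[ℝ] Y) (x : X) :
    bidualOp A (inclusionInDoubleDual ℝ X x) = inclusionInDoubleDual ℝ Y (A x) := rfl

end Aux

/-- If `T : X → Y` is Tauberian and `u : X → Z` is weakly compact, then
`T₁ x = (Tx, ux) : X → Y ⊕₁ Z` is Tauberian; in particular `T + v` is Tauberian for any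
weakly compact `v : X → Y`. -/
theorem stmt10 {Z : Type*} [NormedAddCommGroup Z] [NormedSpace ℝ Z]
    [CompleteSpace X] [CompleteSpace Y] [CompleteSpace Z]
    (T : X →L[ℝ] Y) (hT : Tauberian T) (u : X →L[ℝ] Z) (hu : WeaklyCompactOp u) :
    (∀ T₁ : X →L[ℝ] WithLp 1 (Y × Z),
      (∀ x, T₁ x = (WithLp.equiv 1 (Y × Z)).symm (T x, u x)) → Tauberian T₁) ∧
    (∀ v : X →L[ℝ] Y, WeaklyCompactOp v → Tauberian (T + v)) := by
  constructor
  · intro T₁ hT₁ F ⟨w, hw⟩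
    set P : WithLp 1 (Y × Z) →L[ℝ] Y :=
      (ContinuousLinearMap.fst ℝ Y Z).comp
        (WithLp.prodContinuousLinearEquiv 1 ℝ Y Z : WithLp 1 (Y × Z) →L[ℝ] Y × Z) with hP
    have hTP : T = P.comp T₁ := by
      ext x
      simp [hP, hT₁ x]
    apply hT F
    refine ⟨P w, ?_⟩
    rw [hTP, bidualOp_comp, ContinuousLinearMap.comp_apply, hw, bidualOp_incl]
  · intro v hv F ⟨y, hy⟩
    obtain ⟨y', hy'⟩ := hv F
    apply hT F
    refine ⟨y - y', ?_⟩
    have : bidualOp T F = bidualOp (T + v) F - bidualOp v F := by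
      rw [bidualOp_add]
      exact ContinuousLinearMap.ext fun g => (add_sub_cancel_right (bidualOp T F g) (bidualOp v F g)).symm
    rw [this, hy, hy']
    exact ContinuousLinearMap.ext fun f => (map_sub f y y').symm
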